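/- Let N ≥ 1, let C̄ be an N×N Hermitian positive semidefinite matrix, let Δ₀ ∈ ℝ and η₁, η₂ > 0, and suppose a₀ ∈ ℂ^N satisfies a₀^H C̄ a₀ < Δ₀ and ‖a₀‖² = N. Then there exists λ ∈ (0,1) such that for all μ with 0 < μ ≤ λ, the matrix X(μ) := μ I + (1−μ) a₀ a₀^H is Hermitian positive definite and satisfies tr(C̄ X(μ)) < Δ₀ and N − η₁ < tr X(μ) < N + η₂; i.e., the primal semidefinite relaxation with constraints tr(C̄ X) ≤ Δ₀, N − η₁ ≤ tr X ≤ N + η₂, X ⪰ 0 is strictly feasible. -/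

import Mathlib

open Matrix
open scoped ComplexOrder

/-- Squared Euclidean norm of a complex vector. -/
noncomputable def nsq {N : ℕ} (a : Fin N → ℂ) : ℝ := ∑ i, Complex.normSq (a i)

lemma vmv_mulVec {N : ℕ} (a b x : Fin N → ℂ) :
    (Matrix.vecMulVec a b).mulVec x = fun i => a i * (b ⬝ᵥ x) := by
  funext i
  simp [Matrix.mulVec, Matrix.vecMulVec_apply, dotProduct, Finset.mul_sum, mul_assoc]

lemma quad_form_eq {N : ℕ} (a x : Fin N → ℂ) (c d : ℝ) :
    star x ⬝ᵥ (((c : ℂ) • (1 : Matrix (Fin N) (Fin N) ℂ) +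
      ((d : ℝ) : ℂ) • Matrix.vecMulVec a (star a)).mulVec x)
      = (c : ℂ) * (star x ⬝ᵥ x) + (d : ℂ) * ((star x ⬝ᵥ a) * (star a ⬝ᵥ x)) := by
  rw [Matrix.add_mulVec, dotProduct_add, Matrix.smul_mulVec, Matrix.smul_mulVec,
    Matrix.one_mulVec, dotProduct_smul, dotProduct_smul, vmv_mulVec]
  congr 1
  simp only [smul_eq_mul, dotProduct, Pi.star_apply, Finset.mul_sum, Finset.sum_mul]
  rw [Finset.sum_comm]
  refine Finset.sum_congr rfl fun i _ => ?_
  refine Finset.sum_congr rfl fun j _ => by ring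

lemma star_dot {N : ℕ} (a x : Fin N → ℂ) :
    star x ⬝ᵥ a = starRingEnd ℂ (star a ⬝ᵥ x) := by
  simp [dotProduct, map_sum, mul_comm]

lemma herm_aux {N : ℕ} (a : Fin N → ℂ) (c d : ℝ) :
    ((c : ℂ) • (1 : Matrix (Fin N) (Fin N) ℂ) +
      ((d : ℝ) : ℂ) • Matrix.vecMulVec a (star a)).IsHermitian := by
  unfold Matrix.IsHermitian
  ext i j
  simp [Matrix.conjTranspose_apply, Matrix.one_apply, Matrix.vecMulVec_apply, apply_ite,
    mul_comm, Complex.conj_ofReal]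
  aesop

lemma posdef_aux {N : ℕ} (a : Fin N → ℂ) (μ : ℝ) (hμ : 0 < μ) (hμ1 : μ ≤ 1) :
    ((μ : ℂ) • (1 : Matrix (Fin N) (Fin N) ℂ) +
      ((1 - μ : ℝ) : ℂ) • Matrix.vecMulVec a (star a)).PosDef := by
  refine Matrix.PosDef.of_dotProduct_mulVec_pos (herm_aux a μ (1 - μ)) fun x hx => ?_
  rw [quad_form_eq a x μ (1 - μ)]
  have h1 : (0:ℂ) < star x ⬝ᵥ x := Matrix.dotProduct_star_self_pos_iff.mpr hx
  set z := star a ⬝ᵥ x with hzdef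
  have hz : (star x ⬝ᵥ a) * z = (Complex.normSq z : ℂ) := by
    rw [star_dot a x, ← hzdef, Complex.normSq_eq_conj_mul_self]
  rw [hz]
  rw [Complex.lt_def] at h1 ⊢
  obtain ⟨h1r, h1i⟩ := h1
  constructor
  · simp only [Complex.add_re, Complex.mul_re, Complex.ofReal_re, Complex.ofReal_im,
      Complex.zero_re, zero_mul, sub_zero]
    nlinarith [Complex.normSq_nonneg z, mul_pos hμ h1r]
  · simp only [Complex.add_im, Complex.mul_im, Complex.ofReal_re, Complex.ofReal_im,
      Complex.zero_im, zero_mul, add_zero]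
    simp [← h1i]

lemma trace_mul_vmv {N : ℕ} (C : Matrix (Fin N) (Fin N) ℂ) (a : Fin N → ℂ) :
    Matrix.trace (C * Matrix.vecMulVec a (star a)) = star a ⬝ᵥ C.mulVec a := by
  simp only [Matrix.trace, Matrix.diag, Matrix.mul_apply, Matrix.vecMulVec_apply,
    dotProduct, Matrix.mulVec, Pi.star_apply]
  refine Finset.sum_congr rfl fun i _ => ?_
  rw [Finset.mul_sum]
  refine Finset.sum_congr rfl fun j _ => by ring

lemma traceCX {N : ℕ} (C : Matrix (Fin N) (Fin N) ℂ) (a : Fin N → ℂ) (c d : ℝ) :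
    (Matrix.trace (C * ((c : ℂ) • (1 : Matrix (Fin N) (Fin N) ℂ) +
      ((d : ℝ) : ℂ) • Matrix.vecMulVec a (star a)))).re
      = c * (Matrix.trace C).re + d * (star a ⬝ᵥ C.mulVec a).re := by
  rw [mul_add, Matrix.mul_smul, Matrix.mul_smul, mul_one, Matrix.trace_add,
    Matrix.trace_smul, Matrix.trace_smul, trace_mul_vmv]
  simp [Complex.add_re, smul_eq_mul, Complex.mul_re]

lemma traceX {N : ℕ} (a : Fin N → ℂ) (c d : ℝ) :
    (Matrix.trace ((c : ℂ) • (1 : Matrix (Fin N) (Fin N) ℂ) +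
      ((d : ℝ) : ℂ) • Matrix.vecMulVec a (star a))).re
      = c * N + d * nsq a := by
  rw [Matrix.trace_add, Matrix.trace_smul, Matrix.trace_smul, Matrix.trace_one]
  have : Matrix.trace (Matrix.vecMulVec a (star a)) = ((nsq a : ℝ) : ℂ) := by
    simp only [Matrix.trace, Matrix.diag, Matrix.vecMulVec_apply, Pi.star_apply, nsq]
    push_cast
    exact Finset.sum_congr rfl fun i _ => (Complex.mul_conj (a i))
  rw [this]
  simp [smul_eq_mul, Complex.mul_re]

/-- Strict feasibility of the primal SDP relaxation over the uncertainty set `𝒜₂`: if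
`a₀ᴴC̄a₀ < Δ₀` and `‖a₀‖² = N`, there is `λ ∈ (0,1)` such that for all `0 < μ ≤ λ` the
matrix `X(μ) = μI + (1−μ)a₀a₀ᴴ` is positive definite with `tr(C̄X(μ)) < Δ₀` and
`N − η₁ < tr X(μ) < N + η₂`. -/
theorem stmt_19 {N : ℕ} (hN : 1 ≤ N) (Cbar : Matrix (Fin N) (Fin N) ℂ)
    (hC : Cbar.PosSemidef) (Δ₀ η₁ η₂ : ℝ) (hη₁ : 0 < η₁) (hη₂ : 0 < η₂)
    (a₀ : Fin N → ℂ) (ha₀C : (star a₀ ⬝ᵥ Cbar.mulVec a₀).re < Δ₀) (ha₀ : nsq a₀ = N) :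
    ∃ l : ℝ, l ∈ Set.Ioo (0 : ℝ) 1 ∧ ∀ μ : ℝ, 0 < μ → μ ≤ l →
      ((μ : ℂ) • (1 : Matrix (Fin N) (Fin N) ℂ) +
        ((1 - μ : ℝ) : ℂ) • Matrix.vecMulVec a₀ (star a₀)).PosDef ∧
      (Matrix.trace (Cbar * ((μ : ℂ) • (1 : Matrix (Fin N) (Fin N) ℂ) +
        ((1 - μ : ℝ) : ℂ) • Matrix.vecMulVec a₀ (star a₀)))).re < Δ₀ ∧
      (N : ℝ) - η₁ < (Matrix.trace ((μ : ℂ) • (1 : Matrix (Fin N) (Fin N) ℂ) +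
        ((1 - μ : ℝ) : ℂ) • Matrix.vecMulVec a₀ (star a₀))).re ∧
      (Matrix.trace ((μ : ℂ) • (1 : Matrix (Fin N) (Fin N) ℂ) +
        ((1 - μ : ℝ) : ℂ) • Matrix.vecMulVec a₀ (star a₀))).re < (N : ℝ) + η₂ := by
  set t := (Matrix.trace Cbar).re with ht
  set v := (star a₀ ⬝ᵥ Cbar.mulVec a₀).re with hv
  have hd : (0:ℝ) < |t - v| + 1 := by positivity
  have hΔ : 0 < Δ₀ - v := by linarith
  set l := min (1/2 : ℝ) ((Δ₀ - v) / (2 * (|t - v| + 1))) with hl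
  have hl0 : 0 < l := lt_min (by norm_num) (by positivity)
  have hl1 : l < 1 := lt_of_le_of_lt (min_le_left _ _) (by norm_num)
  refine ⟨l, ⟨hl0, hl1⟩, fun μ hμ0 hμl => ?_⟩
  have hμ1 : μ ≤ 1 := le_trans hμl (le_trans (min_le_left _ _) (by norm_num))
  have hμl' : μ ≤ (Δ₀ - v) / (2 * (|t - v| + 1)) := le_trans hμl (min_le_right _ _)
  have key : μ * (|t - v| + 1) ≤ (Δ₀ - v) / 2 := by
    calc μ * (|t - v| + 1) ≤ ((Δ₀ - v) / (2 * (|t - v| + 1))) * (|t - v| + 1) :=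
          mul_le_mul_of_nonneg_right hμl' hd.le
      _ = (Δ₀ - v) / 2 := by field_simp
  have key2 : μ * (t - v) ≤ μ * (|t - v| + 1) :=
    mul_le_mul_of_nonneg_left (by linarith [le_abs_self (t - v)]) hμ0.le
  refine ⟨posdef_aux a₀ μ hμ0 hμ1, ?_, ?_, ?_⟩
  · rw [traceCX Cbar a₀ μ (1 - μ), ← ht, ← hv]
    nlinarith
  · rw [traceX a₀ μ (1 - μ), ha₀]
    nlinarith
  · rw [traceX a₀ μ (1 - μ), ha₀]
    nlinarith
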